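/- Let G = (V, E) be a finite simple graph, d a positive integer, and let ψ : V → ℝ^d be a random map such that the d·|V| coordinates {ψ(v)_i : v ∈ V, 1 ≤ i ≤ d} are independent and each is uniformly distributed on {−1/√d, +1/√d}. Fix nodes u, v ∈ V and assume every node in N(u) ∪ N(v) has degree at least 1. Define the random vectors u⃗ = Σ_{x ∈ N(u)} ψ(x)·√(1/|N(x)|) and v⃗ = Σ_{y ∈ N(v)} ψ(y)·√(1/|N(y)|). Then E[u⃗ · v⃗] = Σ_{x ∈ N(u) ∩ N(v)} 1/|N(x)|, i.e., the expected dot product equals the Resource Allocation index of the pair (u, v). -/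

import Mathlib

open MeasureTheory ProbabilityTheory

/-- For a finite simple graph, if every neighbor of `u` or `v` has degree at
least 1, the expected dot product of the Resource-Allocation weighted DotHash sketches of
`u` and `v` equals the Resource Allocation index `∑_{x ∈ N(u) ∩ N(v)} 1 / |N(x)|`. -/
theorem dothash_expected_dot_eq_resource_allocation
    {Ω : Type*} [MeasurableSpace Ω] (μ : Measure Ω) [IsProbabilityMeasure μ]
    {V : Type*} [Fintype V] [DecidableEq V]
    (G : SimpleGraph V) [DecidableRel G.Adj]
    (d : ℕ) (hd : 0 < d)
    (ψ : Ω → V → Fin d → ℝ)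
    (hmeas : ∀ (s : V) (i : Fin d), Measurable fun ω => ψ ω s i)
    (hindep : iIndepFun
      (fun (p : V × Fin d) ω => ψ ω p.1 p.2) μ)
    (hunif : ∀ (s : V) (i : Fin d),
      μ {ω | ψ ω s i = 1 / Real.sqrt d} = 1/2 ∧
      μ {ω | ψ ω s i = -(1 / Real.sqrt d)} = 1/2)
    (u v : V)
    (hdeg : ∀ x ∈ G.neighborFinset u ∪ G.neighborFinset v, 1 ≤ G.degree x) :
    ∫ ω, ∑ i,
        (∑ x ∈ G.neighborFinset u, ψ ω x i * Real.sqrt (1 / (G.degree x : ℝ)))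
        * (∑ y ∈ G.neighborFinset v, ψ ω y i * Real.sqrt (1 / (G.degree y : ℝ))) ∂μ
      = ∑ x ∈ G.neighborFinset u ∩ G.neighborFinset v, 1 / (G.degree x : ℝ) := by
  classical
  set a : ℝ := 1 / Real.sqrt d with ha_def
  have hsd : (0:ℝ) < Real.sqrt d := Real.sqrt_pos.mpr (by exact_mod_cast hd)
  have ha : 0 < a := by positivity
  -- a.e. ψ takes values ±a
  have hae : ∀ (s : V) (i : Fin d), ∀ᵐ ω ∂μ, ψ ω s i = a ∨ ψ ω s i = -a := by
    intro s i
    obtain ⟨h1, h2⟩ := hunif s i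
    have hA : MeasurableSet {ω | ψ ω s i = a} := (hmeas s i) (measurableSet_singleton a)
    have hB : MeasurableSet {ω | ψ ω s i = -a} := (hmeas s i) (measurableSet_singleton (-a))
    have hdisj : Disjoint {ω | ψ ω s i = a} {ω | ψ ω s i = -a} := by
      rw [Set.disjoint_left]
      intro ω h1' h2'
      have h3 : a = -a := (Set.mem_setOf.mp h1').symm.trans (Set.mem_setOf.mp h2')
      linarith
    have hUnion : μ ({ω | ψ ω s i = a} ∪ {ω | ψ ω s i = -a}) = 1 := by
      rw [measure_union hdisj hB, h1, h2]
      rw [ENNReal.div_add_div_same]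
      rw [one_add_one_eq_two]
      exact ENNReal.div_self two_ne_zero ENNReal.ofNat_ne_top
    have hcompl : μ ({ω | ψ ω s i = a} ∪ {ω | ψ ω s i = -a})ᶜ = 0 := by
      rw [measure_compl (hA.union hB) (measure_ne_top μ _), hUnion, measure_univ, tsub_self]
    have hset : {ω | ¬(ψ ω s i = a ∨ ψ ω s i = -a)}
        = ({ω | ψ ω s i = a} ∪ {ω | ψ ω s i = -a})ᶜ := by
      ext ω; simp [not_or]
    rw [ae_iff, hset]
    exact hcompl
  -- integrability
  have hint : ∀ (s : V) (i : Fin d), Integrable (fun ω => ψ ω s i) μ := by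
    intro s i
    refine (integrable_const a).mono' (hmeas s i).aestronglyMeasurable ?_
    filter_upwards [hae s i] with ω hω
    rcases hω with h | h <;> rw [h] <;> simp [abs_of_pos ha, le_abs, le_refl]
  -- mean zero
  have hmean : ∀ (s : V) (i : Fin d), ∫ ω, ψ ω s i ∂μ = 0 := by
    intro s i
    obtain ⟨h1, h2⟩ := hunif s i
    have hA : MeasurableSet {ω | ψ ω s i = a} := (hmeas s i) (measurableSet_singleton a)
    have hB : MeasurableSet {ω | ψ ω s i = -a} := (hmeas s i) (measurableSet_singleton (-a))
    have hdisj : Disjoint {ω | ψ ω s i = a} {ω | ψ ω s i = -a} := by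
      rw [Set.disjoint_left]
      intro ω h1' h2'
      have h3 : a = -a := (Set.mem_setOf.mp h1').symm.trans (Set.mem_setOf.mp h2')
      linarith
    have hg : (fun ω => ψ ω s i) =ᵐ[μ]
        (fun ω => Set.indicator {ω | ψ ω s i = a} (fun _ => a) ω
          + Set.indicator {ω | ψ ω s i = -a} (fun _ => -a) ω) := by
      filter_upwards [hae s i] with ω hω
      rcases hω with h | h
      · have hnB : ω ∉ {ω | ψ ω s i = -a} := fun hc => by
          have h3 : a = -a := h.symm.trans (Set.mem_setOf.mp hc)
          linarith
        simp [Set.indicator_of_mem (show ω ∈ {ω | ψ ω s i = a} from h),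
          Set.indicator_of_notMem hnB, h]
      · have hnA : ω ∉ {ω | ψ ω s i = a} := fun hc => by
          have h3 : a = -a := (Set.mem_setOf.mp hc).symm.trans h
          linarith
        simp [Set.indicator_of_notMem hnA,
          Set.indicator_of_mem (show ω ∈ {ω | ψ ω s i = -a} from h), h]
    rw [integral_congr_ae hg, integral_add
        ((integrable_const a).indicator hA) ((integrable_const (-a)).indicator hB),
      integral_indicator_const _ hA, integral_indicator_const _ hB, Measure.real_def, Measure.real_def, h1, h2]
    norm_num
  -- second moment
  have hsq : ∀ (s : V) (i : Fin d), ∫ ω, ψ ω s i * ψ ω s i ∂μ = 1 / d := by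
    intro s i
    have : (fun ω => ψ ω s i * ψ ω s i) =ᵐ[μ] (fun _ => a * a) := by
      filter_upwards [hae s i] with ω hω
      rcases hω with h | h <;> rw [h] <;> ring
    rw [integral_congr_ae this, integral_const, probReal_univ]
    simp only [ENNReal.toReal_one, one_smul, ha_def]
    rw [div_mul_div_comm, one_mul, Real.mul_self_sqrt (by positivity)]
  -- cross terms vanish
  have hcross : ∀ (x y : V) (i : Fin d), x ≠ y → ∫ ω, ψ ω x i * ψ ω y i ∂μ = 0 := by
    intro x y i hxy
    have hne : ((x, i) : V × Fin d) ≠ (y, i) := by simp [hxy]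
    have hi : IndepFun (fun ω => ψ ω x i) (fun ω => ψ ω y i) μ := hindep.indepFun hne
    rw [hi.integral_fun_mul_eq_mul_integral (hmeas x i).aestronglyMeasurable (hmeas y i).aestronglyMeasurable,
      hmean, hmean, mul_zero]
  set c : V → ℝ := fun x => Real.sqrt (1 / (G.degree x : ℝ)) with hc_def
  have hcnn : ∀ x, 0 ≤ c x := fun x => Real.sqrt_nonneg _
  -- integrability of products
  have hintp : ∀ (x y : V) (i : Fin d),
      Integrable (fun ω => ψ ω x i * c x * (ψ ω y i * c y)) μ := by
    intro x y i
    refine (integrable_const (a * c x * (a * c y))).mono'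
      (((hmeas x i).mul_const _).mul ((hmeas y i).mul_const _)).aestronglyMeasurable ?_
    filter_upwards [hae x i, hae y i] with ω hx hy
    have h1 : |ψ ω x i| = a := by rcases hx with h | h <;> rw [h] <;> simp [abs_of_pos ha]
    have h2 : |ψ ω y i| = a := by rcases hy with h | h <;> rw [h] <;> simp [abs_of_pos ha]
    rw [Real.norm_eq_abs, abs_mul, abs_mul, abs_mul, h1, h2,
      abs_of_nonneg (hcnn x), abs_of_nonneg (hcnn y)]
  -- main computation
  have key : ∀ (x y : V) (i : Fin d),
      ∫ ω, ψ ω x i * c x * (ψ ω y i * c y) ∂μ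
        = if y = x then c x * c y * (1 / d) else 0 := by
    intro x y i
    have : (fun ω => ψ ω x i * c x * (ψ ω y i * c y))
        = fun ω => ψ ω x i * ψ ω y i * (c x * c y) := by
      funext ω; ring
    rw [this, integral_mul_const]
    by_cases h : y = x
    · subst h
      rw [hsq]
      simp [if_true, mul_comm]
    · rw [hcross x y _ (fun hc => h hc.symm), zero_mul, if_neg h]
  have hd0 : (d:ℝ) ≠ 0 := by exact_mod_cast hd.ne'
  have hrw : ∀ ω, (∑ i, (∑ x ∈ G.neighborFinset u, ψ ω x i * c x)
        * (∑ y ∈ G.neighborFinset v, ψ ω y i * c y))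
      = ∑ i : Fin d, ∑ x ∈ G.neighborFinset u, ∑ y ∈ G.neighborFinset v,
          ψ ω x i * c x * (ψ ω y i * c y) := by
    intro ω
    exact Finset.sum_congr rfl fun i _ => Finset.sum_mul_sum _ _ _ _
  have h1 : ∫ ω, (∑ i, (∑ x ∈ G.neighborFinset u, ψ ω x i * c x)
        * (∑ y ∈ G.neighborFinset v, ψ ω y i * c y)) ∂μ
      = ∑ i : Fin d, ∑ x ∈ G.neighborFinset u, ∑ y ∈ G.neighborFinset v,
          ∫ ω, ψ ω x i * c x * (ψ ω y i * c y) ∂μ := by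
    rw [integral_congr_ae (Filter.EventuallyEq.of_eq (funext hrw)),
      integral_finset_sum _ (fun i _ => integrable_finset_sum _ (fun x _ =>
        integrable_finset_sum _ (fun y _ => hintp x y i)))]
    refine Finset.sum_congr rfl fun i _ => ?_
    rw [integral_finset_sum _ (fun x _ => integrable_finset_sum _ (fun y _ => hintp x y i))]
    refine Finset.sum_congr rfl fun x _ => ?_
    exact integral_finset_sum _ (fun y _ => hintp x y i)
  rw [h1]
  have h2 : ∀ i : Fin d, (∑ x ∈ G.neighborFinset u, ∑ y ∈ G.neighborFinset v,
        ∫ ω, ψ ω x i * c x * (ψ ω y i * c y) ∂μ)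
      = ∑ x ∈ G.neighborFinset u ∩ G.neighborFinset v, 1 / (G.degree x : ℝ) * (1 / d) := by
    intro i
    have : ∀ x ∈ G.neighborFinset u, (∑ y ∈ G.neighborFinset v,
          ∫ ω, ψ ω x i * c x * (ψ ω y i * c y) ∂μ)
        = if x ∈ G.neighborFinset v then 1 / (G.degree x : ℝ) * (1 / d) else 0 := by
      intro x _
      rw [Finset.sum_congr rfl (fun y _ => key x y i), Finset.sum_ite_eq']
      congr 1
      rw [hc_def, Real.mul_self_sqrt (by positivity)]
    rw [Finset.sum_congr rfl this, Finset.sum_ite_mem]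
  rw [Finset.sum_congr rfl (fun i _ => h2 i), Finset.sum_const, Finset.card_univ,
    Fintype.card_fin, nsmul_eq_mul, Finset.mul_sum]
  refine Finset.sum_congr rfl fun x hx => ?_
  have hdx : (G.degree x : ℝ) ≠ 0 := by
    have h := hdeg x (Finset.mem_union_left _ (Finset.mem_inter.mp hx).1)
    exact Nat.cast_ne_zero.mpr (by omega)
  field_simp
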